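/- Let f¹, f² : U → U be Lip(β) for some β ∈ (1,2], i.e. Fréchet differentiable with bounded derivative and (β−1)-Hölder derivative, with norms |f^i|_β. Then for all u₁,u₂,v₁,v₂ ∈ U: ‖f¹(u₁) − f¹(u₂) − (f²(v₁) − f²(v₂))‖ ≤ |f¹|_β ‖u₁ − u₂ − (v₁ − v₂)‖ + (‖u₁−u₂‖ + ‖v₁−v₂‖)^{β−1} (|f¹|_β ‖u₂ − v₂‖ + |f¹ − f²|_{β−1}). -/
import Mathlib


/-!
Statement 6 (Davie's lemma / Friz–Victoir Lemma 10.22): if `f¹, f²` are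
`Lip(β)` maps of a Banach space `U` for `β ∈ (1,2]` — i.e. Fréchet
differentiable with bound `K = |f¹|_β` on the function, its derivative and the
`(β−1)`-Hölder norm of the derivative, and `ε = |f¹−f²|_{β−1}` bounds the
difference and its `(β−1)`-Hölder norm — then for all `u₁,u₂,v₁,v₂`:
`‖f¹u₁ − f¹u₂ − (f²v₁ − f²v₂)‖ ≤ K‖u₁−u₂−(v₁−v₂)‖ +
  (‖u₁−u₂‖+‖v₁−v₂‖)^{β−1}(K‖u₂−v₂‖ + ε)`.
-/

theorem lip_beta_difference_estimate
    {U : Type*} [NormedAddCommGroup U] [NormedSpace ℝ U]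
    (β : ℝ) (hβ1 : 1 < β) (hβ2 : β ≤ 2)
    (f₁ f₂ : U → U) (K ε : ℝ) (hK : 0 ≤ K) (hε : 0 ≤ ε)
    (hd₁ : Differentiable ℝ f₁) (hd₂ : Differentiable ℝ f₂)
    (hb₁ : ∀ u, ‖f₁ u‖ ≤ K)
    (hD₁ : ∀ u, ‖fderiv ℝ f₁ u‖ ≤ K)
    (hH₁ : ∀ u v, ‖fderiv ℝ f₁ u - fderiv ℝ f₁ v‖ ≤ K * ‖u - v‖ ^ (β - 1))
    (hdiff0 : ∀ u, ‖f₁ u - f₂ u‖ ≤ ε)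
    (hdiffH : ∀ u v, ‖f₁ u - f₂ u - (f₁ v - f₂ v)‖ ≤ ε * ‖u - v‖ ^ (β - 1)) :
    ∀ u₁ u₂ v₁ v₂ : U,
      ‖f₁ u₁ - f₁ u₂ - (f₂ v₁ - f₂ v₂)‖ ≤
        K * ‖u₁ - u₂ - (v₁ - v₂)‖ +
          (‖u₁ - u₂‖ + ‖v₁ - v₂‖) ^ (β - 1) * (K * ‖u₂ - v₂‖ + ε) := by
  intro u₁ u₂ v₁ v₂
  have hα0 : (0 : ℝ) ≤ β - 1 := by linarith
  set D : ℝ := ‖u₁ - u₂‖ + ‖v₁ - v₂‖ with hDdef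
  have hD0 : 0 ≤ D := by positivity
  set w₁ : U := v₁ - u₁ with hw₁
  set w₂ : U := v₂ - u₂ with hw₂
  set g : ℝ → U := fun s => f₁ (u₁ + s • w₁) - f₁ (u₂ + s • w₂) with hg
  set g' : ℝ → U := fun s =>
    fderiv ℝ f₁ (u₁ + s • w₁) w₁ - fderiv ℝ f₁ (u₂ + s • w₂) w₂ with hg'
  set C : ℝ := K * ‖u₁ - u₂ - (v₁ - v₂)‖ + K * D ^ (β - 1) * ‖u₂ - v₂‖ with hC
  -- derivative of g
  have hderiv : ∀ s : ℝ, HasDerivAt g (g' s) s := by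
    intro s
    have h1 : HasDerivAt (fun t : ℝ => u₁ + t • w₁) w₁ s := by
      simpa using ((hasDerivAt_id s).smul_const w₁).const_add u₁
    have h2 : HasDerivAt (fun t : ℝ => u₂ + t • w₂) w₂ s := by
      simpa using ((hasDerivAt_id s).smul_const w₂).const_add u₂
    exact ((hd₁ _).hasFDerivAt.comp_hasDerivAt s h1).sub
      ((hd₁ _).hasFDerivAt.comp_hasDerivAt s h2)
  -- bound on g'
  have hbound : ∀ s ∈ Set.Ico (0 : ℝ) 1, ‖g' s‖ ≤ C := by
    intro s hs
    set A := fderiv ℝ f₁ (u₁ + s • w₁) with hA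
    set B := fderiv ℝ f₁ (u₂ + s • w₂) with hB
    have hsplit : g' s = A (w₁ - w₂) + (A - B) w₂ := by
      simp only [hg', map_sub, ContinuousLinearMap.sub_apply]
      abel
    have hw : w₁ - w₂ = -(u₁ - u₂ - (v₁ - v₂)) := by
      simp only [hw₁, hw₂]; abel
    have hterm1 : ‖A (w₁ - w₂)‖ ≤ K * ‖u₁ - u₂ - (v₁ - v₂)‖ := by
      calc ‖A (w₁ - w₂)‖ ≤ ‖A‖ * ‖w₁ - w₂‖ := A.le_opNorm _
        _ ≤ K * ‖u₁ - u₂ - (v₁ - v₂)‖ := by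
            rw [hw, norm_neg]
            exact mul_le_mul_of_nonneg_right (hD₁ _) (norm_nonneg _)
    have hpq : ‖(u₁ + s • w₁) - (u₂ + s • w₂)‖ ≤ D := by
      have heq : (u₁ + s • w₁) - (u₂ + s • w₂)
          = (1 - s) • (u₁ - u₂) + s • (v₁ - v₂) := by
        simp only [hw₁, hw₂]
        module
      rw [heq]
      calc ‖(1 - s) • (u₁ - u₂) + s • (v₁ - v₂)‖
          ≤ ‖(1 - s) • (u₁ - u₂)‖ + ‖s • (v₁ - v₂)‖ := norm_add_le _ _
        _ = |1 - s| * ‖u₁ - u₂‖ + |s| * ‖v₁ - v₂‖ := by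
            rw [norm_smul, norm_smul, Real.norm_eq_abs, Real.norm_eq_abs]
        _ ≤ 1 * ‖u₁ - u₂‖ + 1 * ‖v₁ - v₂‖ := by
            have hs1 : |1 - s| ≤ 1 := by
              rw [abs_le]; constructor <;> [linarith [hs.2]; linarith [hs.1]]
            have hs2 : |s| ≤ 1 := by
              rw [abs_le]; constructor <;> [linarith [hs.1]; linarith [hs.2]]
            gcongr
        _ = D := by rw [one_mul, one_mul]
    have hAB : ‖A - B‖ ≤ K * D ^ (β - 1) := by
      calc ‖A - B‖ ≤ K * ‖(u₁ + s • w₁) - (u₂ + s • w₂)‖ ^ (β - 1) := hH₁ _ _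
        _ ≤ K * D ^ (β - 1) := by
            exact mul_le_mul_of_nonneg_left
              (Real.rpow_le_rpow (norm_nonneg _) hpq hα0) hK
    have hterm2 : ‖(A - B) w₂‖ ≤ K * D ^ (β - 1) * ‖u₂ - v₂‖ := by
      calc ‖(A - B) w₂‖ ≤ ‖A - B‖ * ‖w₂‖ := (A - B).le_opNorm _
        _ ≤ K * D ^ (β - 1) * ‖u₂ - v₂‖ := by
            have : ‖w₂‖ = ‖u₂ - v₂‖ := by rw [hw₂, norm_sub_rev]
            rw [this]
            exact mul_le_mul_of_nonneg_right hAB (norm_nonneg _)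
    calc ‖g' s‖ = ‖A (w₁ - w₂) + (A - B) w₂‖ := by rw [hsplit]
      _ ≤ ‖A (w₁ - w₂)‖ + ‖(A - B) w₂‖ := norm_add_le _ _
      _ ≤ C := add_le_add hterm1 hterm2
  -- mean value inequality on [0,1]
  have hmv : ‖g 1 - g 0‖ ≤ C * (1 - 0) := by
    apply norm_image_sub_le_of_norm_deriv_le_segment'
      (f := g) (f' := g') (C := C)
      (fun x _ => (hderiv x).hasDerivWithinAt) hbound 1
    exact Set.right_mem_Icc.mpr zero_le_one
  have hg0 : g 0 = f₁ u₁ - f₁ u₂ := by simp [hg]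
  have hg1 : g 1 = f₁ v₁ - f₁ v₂ := by simp [hg, hw₁, hw₂]
  -- epsilon part
  have heps : ‖f₁ v₁ - f₂ v₁ - (f₁ v₂ - f₂ v₂)‖ ≤ ε * D ^ (β - 1) := by
    calc ‖f₁ v₁ - f₂ v₁ - (f₁ v₂ - f₂ v₂)‖ ≤ ε * ‖v₁ - v₂‖ ^ (β - 1) := hdiffH _ _
      _ ≤ ε * D ^ (β - 1) := by
          refine mul_le_mul_of_nonneg_left
            (Real.rpow_le_rpow (norm_nonneg _) ?_ hα0) hε
          have := norm_nonneg (u₁ - u₂)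
          linarith
  have hsplit2 : f₁ u₁ - f₁ u₂ - (f₂ v₁ - f₂ v₂)
      = (g 0 - g 1) + (f₁ v₁ - f₂ v₁ - (f₁ v₂ - f₂ v₂)) := by
    rw [hg0, hg1]; abel
  calc ‖f₁ u₁ - f₁ u₂ - (f₂ v₁ - f₂ v₂)‖
      ≤ ‖g 0 - g 1‖ + ‖f₁ v₁ - f₂ v₁ - (f₁ v₂ - f₂ v₂)‖ := by
        rw [hsplit2]; exact norm_add_le _ _
    _ ≤ C * (1 - 0) + ε * D ^ (β - 1) := by
        refine add_le_add ?_ heps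
        rw [norm_sub_rev]; exact hmv
    _ = K * ‖u₁ - u₂ - (v₁ - v₂)‖ + D ^ (β - 1) * (K * ‖u₂ - v₂‖ + ε) := by
        rw [hC]; ring
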